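/- MMJ distance to a newly added point (Corollary 1): for a point p ∉ Ω and r ∈ {1,…,N}, MMJ(p, Ω_r | Ω ∪ {p}) = min over t ∈ {1,…,N} of max( d(p, Ω_t), MMJ(Ω_t, Ω_r | Ω) ). -/

import Mathlib

/-- The maximum jump (distance between consecutive points) along a list of points. -/
def maxJump {α : Type*} (d : α → α → ℝ) : List α → ℝ
  | a :: b :: l => max (d a b) (maxJump d (b :: l))
  | _ => 0

/-- `L` is a path from `i` to `j` all of whose points lie in `S`. -/
def IsPathIn {α : Type*} (S : Set α) (i j : α) (L : List α) : Prop :=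
  L.head? = some i ∧ L.getLast? = some j ∧ ∀ x ∈ L, x ∈ S

/-- Min-Max-Jump distance between `i` and `j` under the context `S`. -/
noncomputable def MMJ {α : Type*} (d : α → α → ℝ) (S : Set α) (i j : α) : ℝ :=
  sInf {m : ℝ | ∃ L : List α, IsPathIn S i j L ∧ maxJump d L = m}

section Aux

variable {α : Type*} [MetricSpace α]

lemma maxJump_nonneg (L : List α) : 0 ≤ maxJump dist L := by
  induction L with
  | nil => simp [maxJump]
  | cons a L ih =>
    cases L with
    | nil => simp [maxJump]
    | cons b M =>
      simp only [maxJump]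
      exact le_max_of_le_right ih

lemma bddBelow_pathSet (S : Set α) (i j : α) :
    BddBelow {m : ℝ | ∃ L : List α, IsPathIn S i j L ∧ maxJump dist L = m} :=
  ⟨0, fun m ⟨L, _, hL⟩ => hL ▸ maxJump_nonneg L⟩

lemma MMJ_le_maxJump {S : Set α} {i j : α} {L : List α} (h : IsPathIn S i j L) :
    MMJ dist S i j ≤ maxJump dist L :=
  csInf_le (bddBelow_pathSet S i j) ⟨L, h, rfl⟩

lemma pathSet_nonempty {S : Set α} {i j : α} (hi : i ∈ S) (hj : j ∈ S) :
    Set.Nonempty {m : ℝ | ∃ L : List α, IsPathIn S i j L ∧ maxJump dist L = m} :=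
  ⟨maxJump dist [i, j], [i, j], ⟨rfl, by simp, by
    intro x hx
    rcases List.mem_cons.mp hx with rfl | hx
    · exact hi
    · rcases List.mem_cons.mp hx with rfl | hx
      · exact hj
      · simp at hx⟩, rfl⟩

lemma MMJ_prepend {S T : Set α} (hST : S ⊆ T) {x y j : α}
    (hx : x ∈ T) (hy : y ∈ S) (hj : j ∈ S) :
    MMJ dist T x j ≤ max (dist x y) (MMJ dist S y j) := by
  refine le_of_forall_pos_le_add fun ε hε => ?_
  obtain ⟨m, ⟨L, hL, rfl⟩, hm⟩ :=
    exists_lt_of_csInf_lt (pathSet_nonempty hy hj)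
      (lt_add_of_pos_right (MMJ dist S y j) hε)
  obtain ⟨h1, h2, h3⟩ := hL
  cases L with
  | nil => simp at h1
  | cons a rest =>
    simp only [List.head?_cons, Option.some.injEq] at h1
    subst h1
    have hpath : IsPathIn T x j (x :: a :: rest) := by
      refine ⟨rfl, by rw [List.getLast?_cons_cons]; exact h2, ?_⟩
      intro z hz
      rcases List.mem_cons.mp hz with rfl | hz
      · exact hx
      · exact hST (h3 _ hz)
    calc MMJ dist T x j ≤ maxJump dist (x :: a :: rest) := MMJ_le_maxJump hpath
      _ = max (dist x a) (maxJump dist (a :: rest)) := rfl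
      _ ≤ max (dist x a) (MMJ dist S a j + ε) := max_le_max le_rfl hm.le
      _ ≤ max (dist x a) (MMJ dist S a j) + ε :=
          max_le ((le_max_left _ _).trans (le_add_of_nonneg_right hε.le))
            (add_le_add (le_max_right _ _) le_rfl)

lemma mmj_key (Ω : ℕ → α) (N : ℕ) (hN : 1 ≤ N) (p : α)
    (hp : p ∉ Ω '' Set.Icc 1 N) (r : ℕ) (hr : r ∈ Finset.Icc 1 N) :
    ∀ L : List α, (∀ x ∈ L, x ∈ Ω '' Set.Icc 1 N ∪ {p}) →
      L.getLast? = some (Ω r) →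
      ((L.head? = some p →
        (Finset.Icc 1 N).inf' (Finset.nonempty_Icc.mpr hN)
          (fun t => max (dist p (Ω t)) (MMJ dist (Ω '' Set.Icc 1 N) (Ω t) (Ω r)))
          ≤ maxJump dist L) ∧
       (∀ x ∈ Ω '' Set.Icc 1 N, L.head? = some x →
        min ((Finset.Icc 1 N).inf' (Finset.nonempty_Icc.mpr hN)
          (fun t => max (dist p (Ω t)) (MMJ dist (Ω '' Set.Icc 1 N) (Ω t) (Ω r))))
          (MMJ dist (Ω '' Set.Icc 1 N) x (Ω r)) ≤ maxJump dist L)) := by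
  set S := Ω '' Set.Icc 1 N with hS
  set R := (Finset.Icc 1 N).inf' (Finset.nonempty_Icc.mpr hN)
    (fun t => max (dist p (Ω t)) (MMJ dist S (Ω t) (Ω r))) with hR
  have hΩr : Ω r ∈ S := ⟨r, by simpa using hr, rfl⟩
  intro L
  induction L with
  | nil => intro _ hlast; simp at hlast
  | cons a L ih =>
    intro hmem hlast
    cases L with
    | nil =>
      have ha : a = Ω r := by simpa using hlast
      constructor
      · intro hhead
        have hap : a = p := by simpa using hhead
        exact absurd (show p ∈ S by rw [← hap, ha]; exact hΩr) hp
      · intro x hx hhead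
        have hax : a = x := by simpa using hhead
        have hmmj : MMJ dist S x (Ω r) ≤ maxJump dist [a] := by
          refine MMJ_le_maxJump ⟨?_, ?_, ?_⟩
          · simp [hax]
          · simp [ha]
          · intro z hz
            rcases List.mem_cons.mp hz with rfl | hz
            · exact hax ▸ hx
            · simp at hz
        exact (min_le_right _ _).trans hmmj
    | cons b M =>
      have hlast' : (b :: M).getLast? = some (Ω r) := by
        rwa [List.getLast?_cons_cons] at hlast
      have hmem' : ∀ x ∈ b :: M, x ∈ S ∪ {p} :=
        fun x hx => hmem x (List.mem_cons_of_mem a hx)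
      have ih' := ih hmem' hlast'
      have hbmem : b ∈ S ∪ {p} := hmem' b (by simp)
      constructor
      · intro hhead
        have hap : a = p := by simpa using hhead
        show R ≤ max (dist a b) (maxJump dist (b :: M))
        rcases hbmem with hbS | hbp
        · have h2 := ih'.2 b hbS rfl
          obtain ⟨t, ht, hb⟩ := hbS
          have htF : t ∈ Finset.Icc 1 N := by simpa using ht
          have hR1 : R ≤ max (dist p (Ω t)) (MMJ dist S (Ω t) (Ω r)) :=
            Finset.inf'_le _ htF
          calc R ≤ max (dist a b) (min R (MMJ dist S b (Ω r))) := by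
                rw [max_min_distrib_left]
                exact le_min (le_max_right _ _) (by rw [hap, ← hb]; exact hR1)
            _ ≤ max (dist a b) (maxJump dist (b :: M)) := max_le_max le_rfl h2
        · have h1 := ih'.1 (by simp [show b = p from hbp])
          exact h1.trans (le_max_right _ _)
      · intro x hx hhead
        have hax : a = x := by simpa using hhead
        subst hax
        show min R (MMJ dist S a (Ω r)) ≤ max (dist a b) (maxJump dist (b :: M))
        rcases hbmem with hbS | hbp
        · have h2 := ih'.2 b hbS rfl
          have hpre : MMJ dist S a (Ω r) ≤ max (dist a b) (MMJ dist S b (Ω r)) :=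
            MMJ_prepend (le_refl S) hx hbS hΩr
          calc min R (MMJ dist S a (Ω r))
              ≤ max (dist a b) (min R (MMJ dist S b (Ω r))) := by
                rw [max_min_distrib_left]
                exact le_min ((min_le_left _ _).trans (le_max_right _ _))
                  ((min_le_right _ _).trans hpre)
            _ ≤ max (dist a b) (maxJump dist (b :: M)) := max_le_max le_rfl h2
        · have h1 := ih'.1 (by simp [show b = p from hbp])
          exact (min_le_left _ _).trans (h1.trans (le_max_right _ _))

end Aux

theorem mmj_new_point {α : Type*} [MetricSpace α] (Ω : ℕ → α)
    (N : ℕ) (hN : 1 ≤ N) (hinj : Set.InjOn Ω (Set.Icc 1 N))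
    (p : α) (hp : p ∉ Ω '' Set.Icc 1 N)
    (r : ℕ) (hr : r ∈ Finset.Icc 1 N) :
    MMJ dist (Ω '' Set.Icc 1 N ∪ {p}) p (Ω r) =
      (Finset.Icc 1 N).inf' (Finset.nonempty_Icc.mpr hN)
        (fun t => max (dist p (Ω t))
          (MMJ dist (Ω '' Set.Icc 1 N) (Ω t) (Ω r))) := by
  have hΩr : Ω r ∈ Ω '' Set.Icc 1 N := ⟨r, by simpa using hr, rfl⟩
  have hpT : p ∈ Ω '' Set.Icc 1 N ∪ {p} := Or.inr rfl
  apply le_antisymm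
  · apply Finset.le_inf'
    intro t ht
    have hΩt : Ω t ∈ Ω '' Set.Icc 1 N := ⟨t, by simpa using ht, rfl⟩
    exact MMJ_prepend Set.subset_union_left hpT hΩt hΩr
  · apply le_csInf (pathSet_nonempty hpT (Or.inl hΩr))
    rintro m ⟨L, ⟨h1, h2, h3⟩, rfl⟩
    exact (mmj_key Ω N hN p hp r hr L h3 h2).1 h1
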